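/- arXiv:1409.8335 — 3 statements merged into one kernel-verified Lean document; each statement's English description precedes it below -/
import Mathlib

section
/- The ideal ED↑ contains an isomorphic copy of WR: there is a bijection π: ω×ω → ω×ω such that π[A] ∈ ED↑ for every A ∈ WR. -/
open Set

/-- `I` is an ideal on `α`: closed under subsets and finite unions,
contains all finite sets, and is not all of `P(α)`. -/
def IsIdealOn {α : Type*} (I : Set (Set α)) : Prop :=
  (∀ A ∈ I, ∀ B : Set α, B ⊆ A → B ∈ I) ∧
  (∀ A ∈ I, ∀ B ∈ I, A ∪ B ∈ I) ∧
  (∀ A : Set α, A.Finite → A ∈ I) ∧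
  (Set.univ : Set α) ∉ I

/-- Generator of the first type of `WR`: a vertical line. -/
def WRgen1 (S : Set (ℕ × ℕ)) : Prop := ∃ i, S = {p : ℕ × ℕ | p.1 = i}

/-- Generator of the second type of `WR`. -/
def WRgen2 (S : Set (ℕ × ℕ)) : Prop :=
  ∀ p ∈ S, ∀ q ∈ S, p ≠ q → p.1 > q.1 + q.2 ∨ q.1 > p.1 + p.2

/-- The ideal `WR`: sets covered by finitely many generators. -/
def WR : Set (Set (ℕ × ℕ)) :=
  {A | ∃ C : Finset (Set (ℕ × ℕ)), (∀ S ∈ C, WRgen1 S ∨ WRgen2 S) ∧ A ⊆ ⋃₀ ↑C}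

/-- Generator of `ED↑`: a vertical line or the graph of a nondecreasing function. -/
def EDgen (S : Set (ℕ × ℕ)) : Prop :=
  (∃ i, S = {p : ℕ × ℕ | p.1 = i}) ∨
  (∃ f : ℕ → ℕ, Monotone f ∧ S = {p : ℕ × ℕ | p.2 = f p.1})

/-- The ideal `ED↑`. -/
def EDup : Set (Set (ℕ × ℕ)) :=
  {A | ∃ C : Finset (Set (ℕ × ℕ)), (∀ S ∈ C, EDgen S) ∧ A ⊆ ⋃₀ ↑C}

/-- A tree of finite sequences: closed under taking prefixes. -/
def IsTree {α : Type*} (T : Set (List α)) : Prop :=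
  ∀ s ∈ T, ∀ t : List α, t <+: s → t ∈ T

/-- `I` is weakly Ramsey: every (nonempty) tree all of whose ramifications
belong to the dual filter `I*` has a branch with `I`-positive range. -/
def WeaklyRamsey {α : Type*} (I : Set (Set α)) : Prop :=
  ∀ T : Set (List α), ([] : List α) ∈ T → IsTree T →
    (∀ s ∈ T, {x : α | s ++ [x] ∈ T}ᶜ ∈ I) →
    ∃ b : ℕ → α, (∀ k, (List.range k).map b ∈ T) ∧ Set.range b ∉ I

/-- `(X n)` is a partition of `α`. -/
def IsPartition {α : Type*} (X : ℕ → Set α) : Prop :=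
  (∀ m n, m ≠ n → Disjoint (X m) (X n)) ∧ (⋃ n, X n) = Set.univ

/-- `S` is a selector: it meets each piece in at most one point. -/
def IsSelector {α : Type*} (X : ℕ → Set α) (S : Set α) : Prop :=
  ∀ n, (S ∩ X n).Subsingleton

/-- Locally selective: every partition into sets from `I` has an `I`-positive selector. -/
def LocallySelective {α : Type*} (I : Set (Set α)) : Prop :=
  ∀ X : ℕ → Set α, IsPartition X → (∀ n, X n ∈ I) →
    ∃ S : Set α, IsSelector X S ∧ S ∉ I

/-- Weakly selective. -/
def WeaklySelective {α : Type*} (I : Set (Set α)) : Prop :=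
  ∀ X : ℕ → Set α, IsPartition X → {n | X n ∉ I}.Subsingleton →
    (∀ n, (⋃ m, ⋃ _ : n ≤ m, X m) ∉ I) →
    ∃ S : Set α, IsSelector X S ∧ S ∉ I

/-! ### Auxiliary material for the proof -/

open scoped Classical

/-- The bijection: even `j` goes to `(i, i + j/2)` (the part of column `i` on or
above the diagonal), odd `j` goes to `(i + j/2 + 1, i)` (the part of row `i`
strictly right of the diagonal). -/
def pifun : ℕ × ℕ → ℕ × ℕ := fun p =>
  if p.2 % 2 = 0 then (p.1, p.1 + p.2 / 2) else (p.1 + p.2 / 2 + 1, p.1)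

def piinv : ℕ × ℕ → ℕ × ℕ := fun q =>
  if q.1 ≤ q.2 then (q.1, 2 * (q.2 - q.1)) else (q.2, 2 * (q.1 - q.2) - 1)

def piEquiv : (ℕ × ℕ) ≃ (ℕ × ℕ) where
  toFun := pifun
  invFun := piinv
  left_inv := by
    rintro ⟨i, j⟩
    by_cases h : j % 2 = 0
    · simp only [pifun, piinv, h, if_true]
      rw [if_pos (by omega : i ≤ i + j / 2)]
      refine Prod.ext rfl ?_
      simp only
      omega
    · simp only [pifun, piinv, h, if_false]
      rw [if_neg (by omega : ¬ (i + j / 2 + 1 ≤ i))]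
      refine Prod.ext rfl ?_
      simp only
      omega
  right_inv := by
    rintro ⟨x, y⟩
    by_cases h : x ≤ y
    · simp only [piinv, h, if_true, pifun]
      rw [if_pos (by omega : 2 * (y - x) % 2 = 0)]
      refine Prod.ext rfl ?_
      simp only
      omega
    · simp only [piinv, h, if_false, pifun]
      rw [if_neg (by omega : ¬ ((2 * (x - y) - 1) % 2 = 0))]
      refine Prod.ext ?_ rfl
      simp only
      omega

lemma piEquiv_apply (p : ℕ × ℕ) : ⇑piEquiv p = pifun p := rfl

/-- Both coordinates of the image of `p` lie in the interval `[p.1, p.1 + p.2]`. -/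
lemma pifun_bounds (p : ℕ × ℕ) :
    p.1 ≤ (pifun p).1 ∧ (pifun p).1 ≤ p.1 + p.2 ∧
    p.1 ≤ (pifun p).2 ∧ (pifun p).2 ≤ p.1 + p.2 := by
  unfold pifun
  split_ifs with h
  · simp only
    omega
  · simp only
    omega

/-- The empty set is in `EDup`. -/
lemma EDup_empty : (∅ : Set (ℕ × ℕ)) ∈ EDup :=
  ⟨∅, by simp, by simp⟩

lemma EDup_subset {A B : Set (ℕ × ℕ)} (hA : A ∈ EDup) (hBA : B ⊆ A) : B ∈ EDup := by
  obtain ⟨C, hC, hsub⟩ := hA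
  exact ⟨C, hC, hBA.trans hsub⟩

lemma EDup_union {A B : Set (ℕ × ℕ)} (hA : A ∈ EDup) (hB : B ∈ EDup) : A ∪ B ∈ EDup := by
  obtain ⟨C₁, h₁, s₁⟩ := hA
  obtain ⟨C₂, h₂, s₂⟩ := hB
  refine ⟨C₁ ∪ C₂, ?_, ?_⟩
  · intro S hS
    rcases Finset.mem_union.1 hS with h | h
    · exact h₁ S h
    · exact h₂ S h
  · rw [Finset.coe_union, Set.sUnion_union]
    exact Set.union_subset_union s₁ s₂

/-- Comparability hypothesis: `B` is a "chain": any two distinct points are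
strictly ordered in both coordinates, in the same direction. -/
def IsChain2 (B : Set (ℕ × ℕ)) : Prop :=
  ∀ q₁ ∈ B, ∀ q₂ ∈ B, q₁ ≠ q₂ →
    (q₁.1 < q₂.1 ∧ q₁.2 < q₂.2) ∨ (q₂.1 < q₁.1 ∧ q₂.2 < q₁.2)

lemma chain_col_unique {B : Set (ℕ × ℕ)} (hB : IsChain2 B) {x y y' : ℕ}
    (h1 : (x, y) ∈ B) (h2 : (x, y') ∈ B) : y = y' := by
  by_contra hne
  have hne' : ((x, y) : ℕ × ℕ) ≠ (x, y') := by
    intro e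
    exact hne (congrArg Prod.snd e)
  rcases hB _ h1 _ h2 hne' with ⟨h, _⟩ | ⟨h, _⟩ <;>
    · simp only at h
      omega

/-- The "staircase" function covering a chain `B` by a monotone graph. -/
noncomputable def stair (B : Set (ℕ × ℕ)) : ℕ → ℕ
  | 0 => if h : ∃ y, ((0 : ℕ), y) ∈ B then h.choose else 0
  | n + 1 => if h : ∃ y, (n + 1, y) ∈ B then h.choose else stair B n

lemma stair_zero (B : Set (ℕ × ℕ)) :
    stair B 0 = if h : ∃ y, ((0 : ℕ), y) ∈ B then h.choose else 0 := rfl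

lemma stair_succ (B : Set (ℕ × ℕ)) (n : ℕ) :
    stair B (n + 1) = if h : ∃ y, (n + 1, y) ∈ B then h.choose else stair B n := rfl

lemma stair_spec {B : Set (ℕ × ℕ)} (hB : IsChain2 B) :
    ∀ n, (∀ x y, x ≤ n → (x, y) ∈ B → y ≤ stair B n) ∧
      (stair B n = 0 ∨ ∃ x, x ≤ n ∧ (x, stair B n) ∈ B) := by
  intro n
  induction n with
  | zero =>
    by_cases h : ∃ y, ((0 : ℕ), y) ∈ B
    · have hst : stair B 0 = h.choose := by rw [stair_zero, dif_pos h]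
      constructor
      · intro x y hx hmem
        have hx0 : x = 0 := Nat.le_zero.mp hx
        subst hx0
        have hy : y = h.choose := chain_col_unique hB hmem h.choose_spec
        omega
      · exact Or.inr ⟨0, le_refl 0, by rw [hst]; exact h.choose_spec⟩
    · have hst : stair B 0 = 0 := by rw [stair_zero, dif_neg h]
      constructor
      · intro x y hx hmem
        have hx0 : x = 0 := Nat.le_zero.mp hx
        subst hx0
        exact absurd ⟨y, hmem⟩ h
      · exact Or.inl hst
  | succ m ih =>
    by_cases h : ∃ y, (m + 1, y) ∈ B
    · have hst : stair B (m + 1) = h.choose := by rw [stair_succ, dif_pos h]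
      have hle : stair B m ≤ h.choose := by
        rcases ih.2 with h0 | ⟨x, hx, hmem⟩
        · omega
        · have hne : ((x, stair B m) : ℕ × ℕ) ≠ (m + 1, h.choose) := by
            intro e
            have hx1 : x = m + 1 := congrArg Prod.fst e
            omega
          rcases hB _ hmem _ h.choose_spec hne with ⟨_, h2⟩ | ⟨h1, _⟩
          · simp only at h2
            omega
          · simp only at h1
            omega
      constructor
      · intro x y hx hmem
        rw [hst]
        by_cases hxm : x ≤ m
        · have := ih.1 x y hxm hmem
          omega
        · have hxe : x = m + 1 := by omega
          subst hxe
          have hy : y = h.choose := chain_col_unique hB hmem h.choose_spec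
          omega
      · exact Or.inr ⟨m + 1, le_refl _, by rw [hst]; exact h.choose_spec⟩
    · have hst : stair B (m + 1) = stair B m := by rw [stair_succ, dif_neg h]
      constructor
      · intro x y hx hmem
        rw [hst]
        by_cases hxm : x ≤ m
        · exact ih.1 x y hxm hmem
        · have hxe : x = m + 1 := by omega
          subst hxe
          exact absurd ⟨y, hmem⟩ h
      · rw [hst]
        rcases ih.2 with h0 | ⟨x, hx, hm⟩
        · exact Or.inl h0
        · exact Or.inr ⟨x, by omega, hm⟩

lemma stair_mono {B : Set (ℕ × ℕ)} (hB : IsChain2 B) : Monotone (stair B) := by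
  apply monotone_nat_of_le_succ
  intro n
  by_cases h : ∃ y, (n + 1, y) ∈ B
  · rw [stair_succ, dif_pos h]
    rcases (stair_spec hB n).2 with h0 | ⟨x, hx, hmem⟩
    · omega
    · have hne : ((x, stair B n) : ℕ × ℕ) ≠ (n + 1, h.choose) := by
        intro e
        have hx1 : x = n + 1 := congrArg Prod.fst e
        omega
      rcases hB _ hmem _ h.choose_spec hne with ⟨_, h2⟩ | ⟨h1, _⟩
      · simp only at h2
        omega
      · simp only at h1
        omega
  · rw [stair_succ, dif_neg h]

lemma stair_graph {B : Set (ℕ × ℕ)} (hB : IsChain2 B) (x y : ℕ) (h : (x, y) ∈ B) :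
    stair B x = y := by
  cases x with
  | zero =>
    have hex : ∃ y', ((0 : ℕ), y') ∈ B := ⟨y, h⟩
    rw [stair_zero, dif_pos hex]
    exact chain_col_unique hB hex.choose_spec h
  | succ m =>
    have hex : ∃ y', (m + 1, y') ∈ B := ⟨y, h⟩
    rw [stair_succ, dif_pos hex]
    exact chain_col_unique hB hex.choose_spec h

/-- A chain is in `EDup`: it is covered by a single monotone graph. -/
lemma EDup_of_chain {B : Set (ℕ × ℕ)} (hB : IsChain2 B) : B ∈ EDup := by
  refine ⟨{ {p : ℕ × ℕ | p.2 = stair B p.1} }, ?_, ?_⟩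
  · intro S hS
    rw [Finset.mem_singleton] at hS
    subst hS
    exact Or.inr ⟨stair B, stair_mono hB, rfl⟩
  · intro q hq
    rw [Finset.coe_singleton, Set.sUnion_singleton]
    have hq' : (q.1, q.2) ∈ B := by rwa [Prod.mk.eta]
    have := stair_graph hB q.1 q.2 hq'
    exact this.symm

/-- Image of a `WRgen2` set under `pifun` is a chain. -/
lemma chain_of_gen2 {S : Set (ℕ × ℕ)} (hS : WRgen2 S) : IsChain2 (⇑piEquiv '' S) := by
  rintro q₁ ⟨p₁, hp₁, rfl⟩ q₂ ⟨p₂, hp₂, rfl⟩ hne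
  have hpne : p₁ ≠ p₂ := by
    rintro rfl
    exact hne rfl
  have b₁ := pifun_bounds p₁
  have b₂ := pifun_bounds p₂
  rw [piEquiv_apply, piEquiv_apply] at *
  rcases hS p₁ hp₁ p₂ hp₂ hpne with hgt | hgt
  · exact Or.inr ⟨by omega, by omega⟩
  · exact Or.inl ⟨by omega, by omega⟩

/-- Image of a vertical line under `pifun` is in `EDup`. -/
lemma EDup_image_line (n : ℕ) : ⇑piEquiv '' {p : ℕ × ℕ | p.1 = n} ∈ EDup := by
  refine ⟨{ {p : ℕ × ℕ | p.1 = n}, {p : ℕ × ℕ | p.2 = n} }, ?_, ?_⟩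
  · intro S hS
    simp only [Finset.mem_insert, Finset.mem_singleton] at hS
    rcases hS with rfl | rfl
    · exact Or.inl ⟨n, rfl⟩
    · exact Or.inr ⟨fun _ => n, monotone_const, rfl⟩
  · rintro q ⟨p, hp, rfl⟩
    simp only [Set.mem_setOf_eq] at hp
    rw [piEquiv_apply]
    simp only [Finset.coe_insert, Finset.coe_singleton, Set.sUnion_insert,
      Set.sUnion_singleton, Set.mem_union, Set.mem_setOf_eq]
    unfold pifun
    split_ifs
    · left; simp [hp]
    · right; simp [hp]

lemma EDup_image_sUnion :
    ∀ C : Finset (Set (ℕ × ℕ)), (∀ S ∈ C, ⇑piEquiv '' S ∈ EDup) →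
      ⇑piEquiv '' (⋃₀ ↑C) ∈ EDup := by
  intro C
  induction C using Finset.induction_on with
  | empty =>
    intro _
    simpa using EDup_empty
  | @insert S C hSC ih =>
    intro h
    rw [Finset.coe_insert, Set.sUnion_insert, Set.image_union]
    exact EDup_union (h S (Finset.mem_insert_self _ _))
      (ih fun T hT => h T (Finset.mem_insert_of_mem hT))

theorem WR_sub_EDup :
    ∃ π : (ℕ × ℕ) ≃ (ℕ × ℕ), ∀ A ∈ WR, ⇑π '' A ∈ EDup := by
  refine ⟨piEquiv, ?_⟩
  intro A hA
  obtain ⟨C, hC, hsub⟩ := hA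
  have key : ∀ S ∈ C, ⇑piEquiv '' S ∈ EDup := by
    intro S hS
    rcases hC S hS with h1 | h2
    · obtain ⟨n, rfl⟩ := h1
      exact EDup_image_line n
    · exact EDup_of_chain (chain_of_gen2 h2)
  exact EDup_subset (EDup_image_sUnion C key) (Set.image_mono hsub)
end

section
/- The ideal WR does not contain an isomorphic copy of ED↑: there is no bijection σ: ω×ω → ω×ω such that σ⁻¹[A] ∈ WR for every A ∈ ED↑. Consequently WR and ED↑ are not ⊑-equivalent. -/
open Set

lemma exists_gt_of_infinite {s : Set ℕ} (hs : s.Infinite) (a : ℕ) : ∃ b ∈ s, a < b := by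
  by_contra hcon
  push_neg at hcon
  exact hs ((Set.finite_Iic a).subset hcon)

lemma iterate_choice {α : Type*} (R : α → α → Prop) (h : ∀ a, ∃ b, R a b) (a0 : α) :
    ∃ g : ℕ → α, g 0 = a0 ∧ ∀ j, R (g j) (g (j + 1)) := by
  choose f hf using h
  refine ⟨fun j => f^[j] a0, rfl, fun j => ?_⟩
  show R (f^[j] a0) (f^[j+1] a0)
  rw [Function.iterate_succ_apply']
  exact hf _

lemma WRpos (Y : Set (ℕ × ℕ))
    (h : ∀ n : ℕ, ∃ P : ℕ → ℕ × ℕ,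
      (∀ j, j < n → P j ∈ Y ∧ n ≤ (P j).1) ∧
      (∀ j j', j < n → j' < n → j ≠ j' → P j ≠ P j' ∧ (P j).1 ≤ (P j').1 + (P j').2)) :
    Y ∉ WR := by
  classical
  rintro ⟨C, hgen, hcov⟩
  set B := C.sup (fun S => if hS : WRgen1 S then hS.choose else 0) with hB
  set n := B + C.card + 1 with hn
  obtain ⟨P, h1, h2⟩ := h n
  have hSel : ∀ j, j < n → ∃ S, S ∈ C ∧ P j ∈ S := by
    intro j hj
    obtain ⟨S, hS, hPS⟩ := hcov (h1 j hj).1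
    exact ⟨S, hS, hPS⟩
  choose Sel hSelC hSelM using hSel
  have hgen2 : ∀ j (hj : j < n), WRgen2 (Sel j hj) := by
    intro j hj
    rcases hgen _ (hSelC j hj) with hg1 | hg2
    · exfalso
      have hix : (P j).1 = hg1.choose := by
        have hsp := hg1.choose_spec
        have hm := hSelM j hj
        rw [hsp] at hm
        exact hm
      have hle : hg1.choose ≤ B := by
        have h3 := Finset.le_sup (f := fun S => if hS : WRgen1 S then hS.choose else 0) (hSelC j hj)
        have h4 : (fun S => if hS : WRgen1 S then hS.choose else 0) (Sel j hj) = hg1.choose := by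
          simp only [dif_pos hg1]
        simp only [dif_pos hg1] at h3
        exact h3
      have := (h1 j hj).2
      omega
    · exact hg2
  have hinj : ∀ j (hj : j < n) j' (hj' : j' < n), Sel j hj = Sel j' hj' → j = j' := by
    intro j hj j' hj' hEq
    by_contra hne
    obtain ⟨hne', hle⟩ := h2 j j' hj hj' hne
    obtain ⟨_, hle'⟩ := h2 j' j hj' hj (Ne.symm hne)
    have := hgen2 j hj (P j) (hSelM j hj) (P j') (hEq ▸ hSelM j' hj') hne'
    omega
  have hcard : n ≤ C.card := by
    have := Finset.card_le_card_of_injOn (s := Finset.range n) (t := C)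
      (fun j => if hj : j < n then Sel j hj else ∅)
      (fun j hj => by
        rw [Finset.mem_coe, Finset.mem_range] at hj
        simp only [dif_pos hj]
        exact hSelC j hj)
      (fun j hj j' hj' hEq => by
        rw [Finset.mem_coe, Finset.mem_range] at hj hj'
        simp only [dif_pos hj, dif_pos hj'] at hEq
        exact hinj j hj j' hj' hEq)
    rwa [Finset.card_range] at this
  omega

lemma fiber_u_big (σ : (ℕ × ℕ) ≃ (ℕ × ℕ)) {c i : ℕ} (h : {d | (σ (c, d)).1 = i}.Infinite)
    (b D : ℕ) : ∃ d, (σ (c, d)).1 = i ∧ b ≤ (σ (c, d)).2 ∧ D ≤ d := by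
  have hinj : Set.InjOn (fun d => (σ (c, d)).2) {d | (σ (c, d)).1 = i} := by
    intro d hd d' hd' hv
    have hEq : σ (c, d) = σ (c, d') := Prod.ext (hd.trans hd'.symm) hv
    exact congrArg Prod.snd (σ.injective hEq)
  have hfin : ({d | (σ (c, d)).1 = i} ∩ {d | (σ (c, d)).2 < b}).Finite := by
    apply Set.Finite.of_finite_image (f := fun d => (σ (c, d)).2)
    · apply (Set.finite_Iio b).subset
      rintro v ⟨d, hd, rfl⟩
      exact hd.2
    · exact hinj.mono Set.inter_subset_left
  obtain ⟨d, hd1, hd2⟩ := (h.diff (hfin.union (Set.finite_Iio D))).nonempty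
  simp only [Set.mem_union, Set.mem_inter_iff, Set.mem_setOf_eq, Set.mem_Iio, not_or, not_and,
    not_lt] at hd2
  exact ⟨d, hd1, hd2.1 hd1, hd2.2⟩

lemma fiber_v_big (σ : (ℕ × ℕ) ≃ (ℕ × ℕ)) {c w : ℕ} (h : {d | (σ (c, d)).2 = w}.Infinite)
    (b : ℕ) : ∃ d, (σ (c, d)).2 = w ∧ b < (σ (c, d)).1 := by
  have hinj : Set.InjOn (fun d => (σ (c, d)).1) {d | (σ (c, d)).2 = w} := by
    intro d hd d' hd' hv
    have hEq : σ (c, d) = σ (c, d') := Prod.ext hv (hd.trans hd'.symm)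
    exact congrArg Prod.snd (σ.injective hEq)
  have hfin : ({d | (σ (c, d)).2 = w} ∩ {d | (σ (c, d)).1 ≤ b}).Finite := by
    apply Set.Finite.of_finite_image (f := fun d => (σ (c, d)).1)
    · apply (Set.finite_Iic b).subset
      rintro v ⟨d, hd, rfl⟩
      exact hd.2
    · exact hinj.mono Set.inter_subset_left
  obtain ⟨d, hd1, hd2⟩ := (h.diff hfin).nonempty
  simp only [Set.mem_inter_iff, Set.mem_setOf_eq, not_and, not_le] at hd2
  exact ⟨d, hd1, hd2 hd1⟩

lemma col_trichotomy (σ : (ℕ × ℕ) ≃ (ℕ × ℕ)) (c : ℕ) :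
    (∃ i, {d | (σ (c, d)).1 = i}.Infinite) ∨ (∃ w, {d | (σ (c, d)).2 = w}.Infinite) ∨
      (∀ x y, ∃ d, x < (σ (c, d)).1 ∧ y < (σ (c, d)).2) := by
  by_contra hC
  push_neg at hC
  obtain ⟨hA, hB, x, y, hxy⟩ := hC
  have hfin : ({d | (σ (c, d)).1 ≤ x} ∪ {d | (σ (c, d)).2 ≤ y}).Finite := by
    apply Set.Finite.union
    · apply Set.Finite.subset ((Set.finite_Iic x).biUnion
        (fun i _ => (hA i)))
      intro d hd
      simp only [Set.mem_iUnion]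
      exact ⟨(σ (c, d)).1, hd, rfl⟩
    · apply Set.Finite.subset ((Set.finite_Iic y).biUnion
        (fun w _ => (hB w)))
      intro d hd
      simp only [Set.mem_iUnion]
      exact ⟨(σ (c, d)).2, hd, rfl⟩
  obtain ⟨d, hd⟩ := hfin.infinite_compl.nonempty
  simp only [Set.mem_compl_iff, Set.mem_union, Set.mem_setOf_eq, not_or, not_le] at hd
  have := hxy d hd.1
  omega

def Hstage (σ : (ℕ × ℕ) ≃ (ℕ × ℕ)) : Prop :=
  ∀ n x y : ℕ, ∃ p : ℕ → ℕ × ℕ,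
    (∀ j, j < n → x < (σ (p j)).1 ∧ y ≤ (σ (p j)).2 ∧ n ≤ (p j).1) ∧
    (∀ j j', j < j' → j' < n → (σ (p j)).1 < (σ (p j')).1 ∧ (σ (p j)).2 ≤ (σ (p j')).2) ∧
    (∀ j j', j < n → j' < n → j ≠ j' → (p j).1 ≤ (p j').1 + (p j').2)

lemma hstage_T3 (σ : (ℕ × ℕ) ≃ (ℕ × ℕ))
    (h3 : {c | ∀ x y, ∃ d, x < (σ (c, d)).1 ∧ y < (σ (c, d)).2}.Infinite) : Hstage σ := by
  intro n x y
  obtain ⟨c, hc, hcn⟩ := exists_gt_of_infinite h3 n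
  simp only [Set.mem_setOf_eq] at hc
  obtain ⟨d0, hd0⟩ := hc x y
  obtain ⟨e, he0, hes⟩ := iterate_choice
    (fun d d' => (σ (c, d)).1 < (σ (c, d')).1 ∧ (σ (c, d)).2 < (σ (c, d')).2)
    (fun d => hc (σ (c, d)).1 (σ (c, d)).2) d0
  have hu : StrictMono (fun j => (σ (c, e j)).1) := strictMono_nat_of_lt_succ (fun j => (hes j).1)
  have hv : Monotone (fun j => (σ (c, e j)).2) := monotone_nat_of_le_succ (fun j => (hes j).2.le)
  refine ⟨fun j => (c, e j), ?_, ?_, ?_⟩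
  · intro j hj
    refine ⟨lt_of_lt_of_le ?_ (hu.monotone (Nat.zero_le j)), le_trans ?_ (hv (Nat.zero_le j)),
      hcn.le⟩
    · show x < (σ (c, e 0)).1
      rw [he0]; exact hd0.1
    · show y ≤ (σ (c, e 0)).2
      rw [he0]; exact hd0.2.le
  · intro j j' hjj' _
    exact ⟨hu hjj', hv hjj'.le⟩
  · intro j j' _ _ _
    exact Nat.le_add_right c (e j')

lemma hstage_T2b (σ : (ℕ × ℕ) ≃ (ℕ × ℕ))
    (h2 : {c | ∃ w, {d | (σ (c, d)).2 = w}.Infinite}.Infinite)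
    (h2a : ¬ ∃ w, {c | {d | (σ (c, d)).2 = w}.Infinite}.Infinite) : Hstage σ := by
  classical
  push_neg at h2a
  have hbig : ∀ a b : ℕ, ∃ c, (∃ w, b ≤ w ∧ {d | (σ (c, d)).2 = w}.Infinite) ∧ a < c := by
    intro a b
    have hfin : ({c | c ≤ a} ∪ ⋃ w ∈ Set.Iio b, {c | {d | (σ (c, d)).2 = w}.Infinite}).Finite :=
      (Set.finite_Iic a).union ((Set.finite_Iio b).biUnion
        (fun w _ => (h2a w)))
    obtain ⟨c, hc1, hc2⟩ := (h2.diff hfin).nonempty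
    obtain ⟨w, hw⟩ := hc1
    simp only [Set.mem_union, Set.mem_setOf_eq, not_or, Set.mem_iUnion, Set.mem_Iio, not_exists,
      not_and, not_le] at hc2
    refine ⟨c, ⟨w, ?_, hw⟩, hc2.1⟩
    by_contra hwb
    push_neg at hwb
    exact hc2.2 w hwb hw
  intro n x y
  obtain ⟨c, ⟨w, hwy, hfib⟩, hcn⟩ := hbig n y
  have hub : ∀ b, ∃ d, (σ (c, d)).2 = w ∧ b < (σ (c, d)).1 := fun b => fiber_v_big σ hfib b
  obtain ⟨d0, hd0⟩ := hub x
  obtain ⟨e, he0, hes⟩ := iterate_choice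
    (fun d d' => (σ (c, d')).2 = w ∧ (σ (c, d)).1 < (σ (c, d')).1)
    (fun d => hub (σ (c, d)).1) d0
  have hw' : ∀ j, (σ (c, e j)).2 = w := by
    intro j
    cases j with
    | zero => rw [he0]; exact hd0.1
    | succ k => exact (hes k).1
  have hu : StrictMono (fun j => (σ (c, e j)).1) := strictMono_nat_of_lt_succ (fun j => (hes j).2)
  refine ⟨fun j => (c, e j), ?_, ?_, ?_⟩
  · intro j hj
    refine ⟨lt_of_lt_of_le ?_ (hu.monotone (Nat.zero_le j)), ?_, hcn.le⟩
    · show x < (σ (c, e 0)).1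
      rw [he0]; exact hd0.2
    · rw [hw' j]; exact hwy
  · intro j j' hjj' _
    refine ⟨hu hjj', ?_⟩
    rw [hw' j, hw' j']
  · intro j j' _ _ _
    exact Nat.le_add_right c (e j')

lemma hstage_T1b (σ : (ℕ × ℕ) ≃ (ℕ × ℕ))
    (h1 : {c | ∃ i, {d | (σ (c, d)).1 = i}.Infinite}.Infinite)
    (h1a : ¬ ∃ i, {c | {d | (σ (c, d)).1 = i}.Infinite}.Infinite) : Hstage σ := by
  classical
  push_neg at h1a
  set φ : ℕ → ℕ := fun c => if h : ∃ i, {d | (σ (c, d)).1 = i}.Infinite then h.choose else 0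
    with hφ
  have hfibφ : ∀ c, (∃ i, {d | (σ (c, d)).1 = i}.Infinite) →
      {d | (σ (c, d)).1 = φ c}.Infinite := by
    intro c hc
    have : φ c = hc.choose := by rw [hφ]; simp only [dif_pos hc]
    rw [this]
    exact hc.choose_spec
  have hbig : ∀ a b : ℕ, ∃ c, (∃ i, {d | (σ (c, d)).1 = i}.Infinite) ∧ a < c ∧ b < φ c := by
    intro a b
    have hfin : ({c | c ≤ a} ∪ ⋃ i ∈ Set.Iic b, {c | {d | (σ (c, d)).1 = i}.Infinite}).Finite :=
      (Set.finite_Iic a).union ((Set.finite_Iic b).biUnion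
        (fun i _ => (h1a i)))
    obtain ⟨c, hc1, hc2⟩ := (h1.diff hfin).nonempty
    simp only [Set.mem_union, Set.mem_setOf_eq, not_or, Set.mem_iUnion, Set.mem_Iic, not_exists,
      not_and, not_le] at hc2
    refine ⟨c, hc1, hc2.1, ?_⟩
    by_contra hb
    push_neg at hb
    exact absurd (hfibφ c hc1) (by simpa using (hc2.2 (φ c) hb))
  intro n x y
  obtain ⟨c0, hc0, hc0n, hc0x⟩ := hbig n x
  obtain ⟨col, hcol0, hcols⟩ := iterate_choice
    (fun c c' => (∃ i, {d | (σ (c', d)).1 = i}.Infinite) ∧ c < c' ∧ φ c < φ c')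
    (fun c => by
      obtain ⟨c', hc', h1', h2'⟩ := hbig c (φ c)
      exact ⟨c', hc', h1', h2'⟩) c0
  have hcolS1 : ∀ j, ∃ i, {d | (σ (col j, d)).1 = i}.Infinite := by
    intro j
    cases j with
    | zero => rw [hcol0]; exact hc0
    | succ k => exact (hcols k).1
  have hcolmono : StrictMono col := strictMono_nat_of_lt_succ (fun j => (hcols j).2.1)
  have hφmono : StrictMono (fun j => φ (col j)) :=
    strictMono_nat_of_lt_succ (fun j => (hcols j).2.2)
  have hcoln : ∀ j, n < col j := by
    intro j
    have h0 : n < col 0 := by rw [hcol0]; exact hc0n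
    exact lt_of_lt_of_le h0 (hcolmono.monotone (Nat.zero_le j))
  have hφx : ∀ j, x < φ (col j) := by
    intro j
    have h0 : x < φ (col 0) := by rw [hcol0]; exact hc0x
    exact lt_of_lt_of_le h0 (hφmono.monotone (Nat.zero_le j))
  -- now points
  obtain ⟨G, hG0, hGs⟩ := iterate_choice
    (fun q q' : ℕ × ℕ => q'.1 = q.1 + 1 ∧ (σ (col q'.1, q'.2)).1 = φ (col q'.1) ∧
        max y (σ (col q.1, q.2)).2 ≤ (σ (col q'.1, q'.2)).2 ∧ col n ≤ q'.2)
    (fun q => by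
      obtain ⟨d, hd1, hd2, hd3⟩ := fiber_u_big σ (hfibφ _ (hcolS1 (q.1 + 1)))
        (max y (σ (col q.1, q.2)).2) (col n)
      exact ⟨(q.1 + 1, d), rfl, hd1, hd2, hd3⟩)
    (0, (fiber_u_big σ (hfibφ _ (hcolS1 0)) y (col n)).choose)
  have hGidx : ∀ j, (G j).1 = j := by
    intro j
    induction j with
    | zero => rw [hG0]
    | succ k ih => have := (hGs k).1; omega
  have hspec0 := (fiber_u_big σ (hfibφ _ (hcolS1 0)) y (col n)).choose_spec
  have hstep : ∀ k, (σ (col (k+1), (G (k+1)).2)).1 = φ (col (k+1)) ∧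
      max y (σ (col k, (G k).2)).2 ≤ (σ (col (k+1), (G (k+1)).2)).2 ∧ col n ≤ (G (k+1)).2 := by
    intro k
    have h := hGs k
    rw [hGidx k] at h
    obtain ⟨h1', h2', h3', h4'⟩ := h
    rw [h1'] at h2' h3'
    exact ⟨h2', h3', h4'⟩
  have hfib1 : ∀ j, (σ (col j, (G j).2)).1 = φ (col j) := by
    intro j
    cases j with
    | zero => rw [hG0]; exact hspec0.1
    | succ k => exact (hstep k).1
  have hvy : ∀ j, y ≤ (σ (col j, (G j).2)).2 := by
    intro j
    cases j with
    | zero => rw [hG0]; exact hspec0.2.1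
    | succ k => exact le_trans (le_max_left _ _) (hstep k).2.1
  have hvmono : Monotone (fun j => (σ (col j, (G j).2)).2) :=
    monotone_nat_of_le_succ (fun j => le_trans (le_max_right _ _) (hstep j).2.1)
  have hDcoln : ∀ j, col n ≤ (G j).2 := by
    intro j
    cases j with
    | zero => rw [hG0]; exact hspec0.2.2
    | succ k => exact (hstep k).2.2
  refine ⟨fun j => (col j, (G j).2), ?_, ?_, ?_⟩
  · intro j hj
    refine ⟨?_, hvy j, (hcoln j).le⟩
    rw [hfib1 j]
    exact hφx j
  · intro j j' hjj' _
    rw [hfib1 j, hfib1 j']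
    exact ⟨hφmono hjj', hvmono hjj'.le⟩
  · intro j j' hj hj' _
    calc (col j : ℕ) ≤ col n := hcolmono.monotone hj.le
      _ ≤ (G j').2 := hDcoln j'
      _ ≤ col j' + (G j').2 := Nat.le_add_left _ _

lemma master (σ : (ℕ × ℕ) ≃ (ℕ × ℕ)) (hσ : ∀ A ∈ EDup, ⇑σ ⁻¹' A ∈ WR) (H : Hstage σ) :
    False := by
  classical
  obtain ⟨g, hg0, hgs⟩ := iterate_choice
    (fun a b : ℕ × (ℕ → ℕ × ℕ) × ℕ × ℕ =>
      b.1 = a.1 + 1 ∧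
      (∀ j, j < b.1 → a.2.2.1 < (σ (b.2.1 j)).1 ∧ a.2.2.2 ≤ (σ (b.2.1 j)).2 ∧
        b.1 ≤ (b.2.1 j).1) ∧
      (∀ j j', j < j' → j' < b.1 →
        (σ (b.2.1 j)).1 < (σ (b.2.1 j')).1 ∧ (σ (b.2.1 j)).2 ≤ (σ (b.2.1 j')).2) ∧
      (∀ j j', j < b.1 → j' < b.1 → j ≠ j' → (b.2.1 j).1 ≤ (b.2.1 j').1 + (b.2.1 j').2) ∧
      b.2.2.1 = max (a.2.2.1 + 1) ((σ (b.2.1 a.1)).1) ∧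
      b.2.2.2 = max a.2.2.2 ((σ (b.2.1 a.1)).2))
    (fun a => by
      obtain ⟨p, hp1, hp2, hp3⟩ := H (a.1 + 1) a.2.2.1 a.2.2.2
      exact ⟨(a.1 + 1, p, max (a.2.2.1 + 1) ((σ (p a.1)).1), max a.2.2.2 ((σ (p a.1)).2)),
        rfl, hp1, hp2, hp3, rfl, rfl⟩)
    (0, (fun _ => (0, 0)), 0, 0)
  have hidx : ∀ m, (g m).1 = m := by
    intro m
    induction m with
    | zero => rw [hg0]
    | succ k ih => have := (hgs k).1; omega
  have stepA : ∀ m j, j < m + 1 →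
      (g m).2.2.1 < (σ ((g (m+1)).2.1 j)).1 ∧ (g m).2.2.2 ≤ (σ ((g (m+1)).2.1 j)).2 ∧
      m + 1 ≤ ((g (m+1)).2.1 j).1 := by
    intro m j hj
    have h := (hgs m).2.1 j (by rw [hidx (m+1)]; exact hj)
    rw [hidx (m+1)] at h
    exact h
  have stepB : ∀ m j j', j < j' → j' < m + 1 →
      (σ ((g (m+1)).2.1 j)).1 < (σ ((g (m+1)).2.1 j')).1 ∧
      (σ ((g (m+1)).2.1 j)).2 ≤ (σ ((g (m+1)).2.1 j')).2 := by
    intro m j j' hjj' hj'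
    exact (hgs m).2.2.1 j j' hjj' (by rw [hidx (m+1)]; exact hj')
  have stepC : ∀ m j j', j < m + 1 → j' < m + 1 → j ≠ j' →
      ((g (m+1)).2.1 j).1 ≤ ((g (m+1)).2.1 j').1 + ((g (m+1)).2.1 j').2 := by
    intro m j j' hj hj' hne
    exact (hgs m).2.2.2.1 j j' (by rw [hidx (m+1)]; exact hj) (by rw [hidx (m+1)]; exact hj') hne
  have stepX : ∀ m, (g (m+1)).2.2.1 = max ((g m).2.2.1 + 1) ((σ ((g (m+1)).2.1 m)).1) := by
    intro m
    have h := (hgs m).2.2.2.2.1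
    rw [hidx m] at h
    exact h
  have stepY : ∀ m, (g (m+1)).2.2.2 = max (g m).2.2.2 ((σ ((g (m+1)).2.1 m)).2) := by
    intro m
    have h := (hgs m).2.2.2.2.2
    rw [hidx m] at h
    exact h
  have Ule : ∀ m j, j < m + 1 → (σ ((g (m+1)).2.1 j)).1 ≤ (σ ((g (m+1)).2.1 m)).1 := by
    intro m j hj
    rcases Nat.lt_or_ge j m with h | h
    · exact (stepB m j m h (Nat.lt_succ_self m)).1.le
    · have hjm : j = m := by omega
      rw [hjm]
  have Vle : ∀ m j, j < m + 1 → (σ ((g (m+1)).2.1 j)).2 ≤ (σ ((g (m+1)).2.1 m)).2 := by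
    intro m j hj
    rcases Nat.lt_or_ge j m with h | h
    · exact (stepB m j m h (Nat.lt_succ_self m)).2
    · have hjm : j = m := by omega
      rw [hjm]
  have Xdom : ∀ m j, j < m + 1 → (σ ((g (m+1)).2.1 j)).1 ≤ (g (m+1)).2.2.1 := by
    intro m j hj
    rw [stepX m]
    exact le_trans (Ule m j hj) (le_max_right _ _)
  have Ydom : ∀ m j, j < m + 1 → (σ ((g (m+1)).2.1 j)).2 ≤ (g (m+1)).2.2.2 := by
    intro m j hj
    rw [stepY m]
    exact le_trans (Vle m j hj) (le_max_right _ _)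
  have Xsucc : ∀ m, (g m).2.2.1 < (g (m+1)).2.2.1 := by
    intro m
    rw [stepX m]
    exact lt_of_lt_of_le (Nat.lt_succ_self _) (le_max_left _ _)
  have Ysucc : ∀ m, (g m).2.2.2 ≤ (g (m+1)).2.2.2 := by
    intro m
    rw [stepY m]
    exact le_max_left _ _
  have Xmono : ∀ m m', m ≤ m' → (g m).2.2.1 ≤ (g m').2.2.1 := by
    intro m m' h
    exact monotone_nat_of_le_succ (fun k => (Xsucc k).le) h
  have Ymono : ∀ m m', m ≤ m' → (g m).2.2.2 ≤ (g m').2.2.2 := by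
    intro m m' h
    exact monotone_nat_of_le_succ Ysucc h
  have Xge : ∀ m, m ≤ (g m).2.2.1 := by
    intro m
    induction m with
    | zero => exact Nat.zero_le _
    | succ k ih => have := Xsucc k; omega
  have Uge : ∀ m j, j < m + 1 → m + 1 ≤ (σ ((g (m+1)).2.1 j)).1 := by
    intro m j hj
    have h1 := (stepA m j hj).1
    have h2 := Xge m
    omega
  -- the monotone function
  set f : ℕ → ℕ := fun x =>
    ((Finset.range (x+1) ×ˢ Finset.range (x+1)).filter
      (fun q => q.2 < q.1 ∧ (σ ((g q.1).2.1 q.2)).1 ≤ x)).sup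
      (fun q => (σ ((g q.1).2.1 q.2)).2) with hf
  have hfmono : Monotone f := by
    intro x x' hxx'
    apply Finset.sup_mono
    intro q hq
    simp only [Finset.mem_filter, Finset.mem_product, Finset.mem_range] at hq ⊢
    refine ⟨⟨?_, ?_⟩, hq.2.1, le_trans hq.2.2 hxx'⟩ <;> omega
  have hfval : ∀ m j, j < m + 1 →
      f ((σ ((g (m+1)).2.1 j)).1) = (σ ((g (m+1)).2.1 j)).2 := by
    intro m j hj
    apply le_antisymm
    · apply Finset.sup_le
      intro q hq
      simp only [Finset.mem_filter, Finset.mem_product, Finset.mem_range] at hq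
      obtain ⟨⟨hq1, hq2⟩, hq3, hq4⟩ := hq
      obtain ⟨q1, q2⟩ := q
      simp only at hq1 hq2 hq3 hq4 ⊢
      obtain ⟨m', rfl⟩ : ∃ m', q1 = m' + 1 := ⟨q1 - 1, by omega⟩
      rcases lt_trichotomy m' m with hlt | heq | hgt
      · have h1 := Ydom m' q2 hq3
        have h2 : (g (m'+1)).2.2.2 ≤ (g m).2.2.2 := Ymono _ _ hlt
        have h3 := (stepA m j hj).2.1
        omega
      · subst heq
        rcases lt_trichotomy q2 j with h | h | h
        · exact (stepB m' q2 j h hj).2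
        · rw [h]
        · have := (stepB m' j q2 h hq3).1
          omega
      · have := stepA m' q2 hq3
        have h2 : (g (m+1)).2.2.1 ≤ (g m').2.2.1 := Xmono _ _ hgt
        have h3 := Xdom m j hj
        omega
    · apply Finset.le_sup (f := fun q => (σ ((g q.1).2.1 q.2)).2)
        (b := (m + 1, j))
      simp only [Finset.mem_filter, Finset.mem_product, Finset.mem_range]
      have h1 := Uge m j hj
      exact ⟨⟨by omega, by omega⟩, hj, le_refl _⟩
  -- conclude
  have hgraph : {p : ℕ × ℕ | p.2 = f p.1} ∈ EDup := by
    refine ⟨{{p : ℕ × ℕ | p.2 = f p.1}}, ?_, ?_⟩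
    · intro S hS
      rw [Finset.mem_singleton] at hS
      subst hS
      exact Or.inr ⟨f, hfmono, rfl⟩
    · intro p hp
      exact ⟨_, by simp, hp⟩
  refine WRpos (⇑σ ⁻¹' {p : ℕ × ℕ | p.2 = f p.1}) ?_ (hσ _ hgraph)
  intro N
  cases N with
  | zero =>
    exact ⟨fun _ => (0, 0), fun j hj => absurd hj (Nat.not_lt_zero j),
      fun j j' hj => absurd hj (Nat.not_lt_zero j)⟩
  | succ m =>
    refine ⟨(g (m+1)).2.1, ?_, ?_⟩
    · intro j hj
      refine ⟨?_, (stepA m j hj).2.2⟩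
      show σ ((g (m+1)).2.1 j) ∈ {p : ℕ × ℕ | p.2 = f p.1}
      exact (hfval m j hj).symm
    · intro j j' hj hj' hne
      constructor
      · intro hEq
        rcases Nat.lt_or_ge j j' with h | h
        · exact absurd (congrArg (fun p => (σ p).1) hEq) (Nat.ne_of_lt (stepB m j j' h hj').1)
        · have h' : j' < j := by omega
          exact absurd (congrArg (fun p => (σ p).1) hEq).symm
            (Nat.ne_of_lt (stepB m j' j h' hj).1)
      · exact stepC m j j' hj hj' hne

lemma line_case (σ : (ℕ × ℕ) ≃ (ℕ × ℕ)) (hσ : ∀ A ∈ EDup, ⇑σ ⁻¹' A ∈ WR)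
    (A : Set (ℕ × ℕ)) (hA : EDgen A)
    (h : ∀ n : ℕ, ∃ c, n ≤ c ∧ {d | σ (c, d) ∈ A}.Infinite) : False := by
  have hmem : A ∈ EDup := by
    refine ⟨{A}, ?_, ?_⟩
    · intro S hS
      rw [Finset.mem_singleton] at hS
      subst hS
      exact hA
    · intro p hp
      exact ⟨A, by simp, hp⟩
  refine WRpos (⇑σ ⁻¹' A) ?_ (hσ A hmem)
  intro n
  obtain ⟨c, hc, hfib⟩ := h n
  let emb := hfib.natEmbedding
  refine ⟨fun j => (c, (emb j).1), fun j hj => ⟨(emb j).2, hc⟩, ?_⟩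
  intro j j' hj hj' hne
  refine ⟨?_, Nat.le_add_right c _⟩
  intro hEq
  apply hne
  apply emb.injective
  apply Subtype.ext
  exact congrArg Prod.snd hEq

theorem EDup_not_sub_WR :
    (¬ ∃ σ : (ℕ × ℕ) ≃ (ℕ × ℕ), ∀ A ∈ EDup, ⇑σ ⁻¹' A ∈ WR) ∧
    ¬ ((∃ f : (ℕ × ℕ) ≃ (ℕ × ℕ), ∀ A ∈ WR, ⇑f ⁻¹' A ∈ EDup) ∧
       (∃ g : (ℕ × ℕ) ≃ (ℕ × ℕ), ∀ A ∈ EDup, ⇑g ⁻¹' A ∈ WR)) := by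
  have main : ¬ ∃ σ : (ℕ × ℕ) ≃ (ℕ × ℕ), ∀ A ∈ EDup, ⇑σ ⁻¹' A ∈ WR := by
    rintro ⟨σ, hσ⟩
    classical
    by_cases h3 : {c | ∀ x y, ∃ d, x < (σ (c, d)).1 ∧ y < (σ (c, d)).2}.Infinite
    · exact master σ hσ (hstage_T3 σ h3)
    by_cases h2 : {c | ∃ w, {d | (σ (c, d)).2 = w}.Infinite}.Infinite
    · by_cases h2a : ∃ w, {c | {d | (σ (c, d)).2 = w}.Infinite}.Infinite
      · obtain ⟨w, hw⟩ := h2a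
        refine line_case σ hσ {p : ℕ × ℕ | p.2 = w}
          (Or.inr ⟨fun _ => w, monotone_const, rfl⟩) ?_
        intro n
        obtain ⟨c, hc, hcn⟩ := exists_gt_of_infinite hw n
        exact ⟨c, hcn.le, hc⟩
      · exact master σ hσ (hstage_T2b σ h2 h2a)
    by_cases h1 : {c | ∃ i, {d | (σ (c, d)).1 = i}.Infinite}.Infinite
    · by_cases h1a : ∃ i, {c | {d | (σ (c, d)).1 = i}.Infinite}.Infinite
      · obtain ⟨i, hi⟩ := h1a
        refine line_case σ hσ {p : ℕ × ℕ | p.1 = i} (Or.inl ⟨i, rfl⟩) ?_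
        intro n
        obtain ⟨c, hc, hcn⟩ := exists_gt_of_infinite hi n
        exact ⟨c, hcn.le, hc⟩
      · exact master σ hσ (hstage_T1b σ h1 h1a)
    · have htri := col_trichotomy σ
      have hfin : (Set.univ : Set ℕ).Finite := by
        apply Set.Finite.subset (((Set.not_infinite.mp h1).union
          (Set.not_infinite.mp h2)).union (Set.not_infinite.mp h3))
        intro c _
        rcases htri c with h | h | h
        · exact Or.inl (Or.inl h)
        · exact Or.inl (Or.inr h)
        · exact Or.inr h
      exact Set.infinite_univ hfin
  exact ⟨main, fun h => main h.2⟩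
end

section
/- For any ideal I on a countable set, the following are equivalent: (1) I is not weakly Ramsey; (2) I contains an isomorphic copy of WR (WR ⊑ I); (3) WR is below I in the Katětov order (WR ≤_K I). -/
open Set

set_option linter.dupNamespace false
namespace WRP



/-! ### Triangle codec -/

def tri : ℕ → ℕ
  | 0 => 0
  | d+1 => tri d + d + 1

lemma tri_succ (d : ℕ) : tri (d+1) = tri d + d + 1 := rfl

lemma tri_mono : Monotone tri := by
  apply monotone_nat_of_le_succ
  intro n; rw [tri_succ]; omega

lemma self_le_tri (n : ℕ) : n ≤ tri n := by
  induction n with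
  | zero => simp [tri]
  | succ n ih => rw [tri_succ]; omega

lemma tri_ex (n : ℕ) : ∃ d, n < tri (d+1) :=
  ⟨n, lt_of_le_of_lt (self_le_tri n) (by rw [tri_succ]; omega)⟩

def dg (n : ℕ) : ℕ := Nat.find (tri_ex n)

lemma dg_spec (n : ℕ) : n < tri (dg n + 1) := Nat.find_spec (tri_ex n)

lemma dg_min (n : ℕ) : tri (dg n) ≤ n := by
  rcases h : dg n with _ | d
  · simp [tri]
  · have := Nat.find_min (tri_ex n) (show d < dg n by omega)
    rw [h] at *
    omega

lemma dg_eq {d n : ℕ} (h1 : tri d ≤ n) (h2 : n < tri (d+1)) : dg n = d := by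
  have hle : dg n ≤ d := Nat.find_min' (tri_ex n) h2
  rcases lt_or_eq_of_le hle with h | h
  · have h3 := tri_mono (show dg n + 1 ≤ d by omega)
    have h4 := dg_spec n
    omega
  · exact h

def code (i j : ℕ) : ℕ := tri (i+j) + i

lemma code_lt (i j : ℕ) : code i j < tri (i+j+1) := by
  rw [code, tri_succ]; omega

lemma dg_code (i j : ℕ) : dg (code i j) = i + j :=
  dg_eq (by rw [code]; omega) (code_lt i j)

def col (n : ℕ) : ℕ := n - tri (dg n)
def ht (n : ℕ) : ℕ := dg n - col n

lemma col_le_dg (n : ℕ) : col n ≤ dg n := by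
  have h1 := dg_min n
  have h2 := dg_spec n
  rw [tri_succ] at h2
  rw [col]; omega

lemma col_add_ht (n : ℕ) : col n + ht n = dg n := by
  have := col_le_dg n; rw [ht]; omega

lemma col_code (i j : ℕ) : col (code i j) = i := by
  rw [col, dg_code, code]; omega

lemma ht_code (i j : ℕ) : ht (code i j) = j := by
  have := col_code i j
  rw [ht, dg_code, this]; omega

lemma code_colht (n : ℕ) : code (col n) (ht n) = n := by
  rw [code, col_add_ht]
  have := dg_min n
  rw [col]; omega

lemma code_le (n : ℕ) {k : ℕ} (hk : k ≤ col n + ht n) : tri k ≤ n := by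
  calc tri k ≤ tri (col n + ht n) := tri_mono hk
  _ ≤ code (col n) (ht n) := by rw [code]; omega
  _ = n := code_colht n

lemma lt_tri_of_code (n : ℕ) {k : ℕ} (hk : col n + ht n < k) : n < tri k := by
  calc n < tri (col n + ht n + 1) := by
        conv_lhs => rw [← code_colht n]
        exact code_lt _ _
  _ ≤ tri k := tri_mono hk

/-! ### strictly increasing lists are sublists of ranges -/

lemma sublist_range' : ∀ (l : List ℕ) (s n : ℕ), l.Pairwise (· < ·) →
    (∀ x ∈ l, s ≤ x ∧ x < s + n) → List.Sublist l (List.range' s n) := by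
  intro l
  induction l with
  | nil => intro s n _ _; exact List.nil_sublist _
  | cons a l ih =>
    intro s n hp hb
    obtain ⟨hsa, han⟩ := hb a (by simp)
    have hsplit : List.range' s n = List.range' s (a - s) ++ List.range' a (n - (a - s)) := by
      have h := List.range'_append (s := s) (m := a-s) (n := n - (a-s)) (step := 1)
      rw [show s + 1 * (a - s) = a by omega, show (a-s) + (n - (a-s)) = n by omega] at h
      exact h.symm
    rw [hsplit]
    have hmem : List.range' a (n - (a-s)) = a :: List.range' (a+1) (n - (a-s) - 1) := by
      rw [show n - (a-s) = (n - (a-s) - 1) + 1 by omega, List.range'_succ]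
      norm_num
    rw [hmem]
    refine List.Sublist.trans ?_ (List.sublist_append_right _ _)
    refine List.Sublist.cons₂ a ?_
    apply ih
    · exact hp.of_cons
    · intro x hx
      have h1 : a < x := (List.pairwise_cons.mp hp).1 x hx
      have h2 := hb x (by simp [hx])
      omega

lemma sublist_range (l : List ℕ) (m : ℕ) (hp : l.Pairwise (· < ·))
    (hb : ∀ x ∈ l, x < m) : List.Sublist l (List.range m) := by
  rw [List.range_eq_range']
  exact sublist_range' l 0 m hp (fun x hx => ⟨Nat.zero_le x, by simpa using hb x hx⟩)


attribute [local instance] Classical.propDecidable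

variable {X : Type*} (e : ℕ ≃ X) (T : Set (List X)) (I : Set (Set X))

/-! ### ideal helpers -/

lemma Isub (hI : IsIdealOn I) {A B : Set X} (hA : A ∈ I) (h : B ⊆ A) : B ∈ I :=
  hI.1 A hA B h

lemma Iun (hI : IsIdealOn I) {A B : Set X} (hA : A ∈ I) (hB : B ∈ I) : A ∪ B ∈ I :=
  hI.2.1 A hA B hB

lemma Ifin (hI : IsIdealOn I) {A : Set X} (h : A.Finite) : A ∈ I := hI.2.2.1 A h

lemma coI_infinite (hI : IsIdealOn I) {A : Set X} (h : Aᶜ ∈ I) : A.Infinite := by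
  intro hfin
  exact hI.2.2.2 (Isub I hI (Iun I hI (Ifin I hI hfin) h) (by simp [Set.union_compl_self]))

lemma exists_coI_not_mem (hI : IsIdealOn I) {A : Set X} (h : Aᶜ ∈ I) (l : List X) :
    ∃ x, x ∈ A ∧ x ∉ l := by
  obtain ⟨x, hx⟩ := ((coI_infinite I hI h).diff l.finite_toSet).nonempty
  exact ⟨x, hx.1, hx.2⟩

/-! ### master branch -/

noncomputable def zc (s : List X) : X :=
  if h : ∃ n, s ++ [e n] ∈ T ∧ e n ∉ s then e (Nat.find h) else e 0

noncomputable def zl : ℕ → List X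
  | 0 => []
  | k+1 => zl k ++ [zc e T (zl k)]

noncomputable def zz (k : ℕ) : X := zc e T (zl e T k)

lemma zl_succ (k : ℕ) : zl e T (k+1) = zl e T k ++ [zz e T k] := rfl

lemma zl_eq_map (k : ℕ) : zl e T k = (List.range k).map (zz e T) := by
  induction k with
  | zero => rfl
  | succ k ih => rw [zl_succ, List.range_succ, List.map_append, ih]; rfl

lemma mem_zl {y : X} {k : ℕ} : y ∈ zl e T k ↔ ∃ m < k, zz e T m = y := by
  rw [zl_eq_map]; simp

lemma zl_spec (hI : IsIdealOn I) (hT0 : ([] : List X) ∈ T)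
    (hram : ∀ s ∈ T, {x : X | s ++ [x] ∈ T}ᶜ ∈ I) : ∀ k, zl e T k ∈ T ∧ (zl e T k ++ [zz e T k] ∈ T ∧ zz e T k ∉ zl e T k) := by
  intro k
  induction k with
  | zero =>
    refine ⟨hT0, ?_⟩
    have hex : ∃ n, zl e T 0 ++ [e n] ∈ T ∧ e n ∉ zl e T 0 := by
      obtain ⟨x, hx1, hx2⟩ := exists_coI_not_mem I hI (hram _ hT0) ([] : List X)
      exact ⟨e.symm x, by simpa [zl] using hx1, by simp [zl]⟩
    have : zz e T 0 = e (Nat.find hex) := by rw [zz, zc, dif_pos hex]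
    rw [this]
    exact Nat.find_spec hex
  | succ k ih =>
    have hT : zl e T (k+1) ∈ T := by rw [zl_succ]; exact ih.2.1
    refine ⟨hT, ?_⟩
    have hex : ∃ n, zl e T (k+1) ++ [e n] ∈ T ∧ e n ∉ zl e T (k+1) := by
      obtain ⟨x, hx1, hx2⟩ := exists_coI_not_mem I hI (hram _ hT) (zl e T (k+1))
      exact ⟨e.symm x, by simpa using hx1, by simpa using hx2⟩
    have : zz e T (k+1) = e (Nat.find hex) := by rw [zz, zc, dif_pos hex]
    rw [this]
    exact Nat.find_spec hex

lemma zz_inj (hI : IsIdealOn I) (hT0 : ([] : List X) ∈ T)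
    (hram : ∀ s ∈ T, {x : X | s ++ [x] ∈ T}ᶜ ∈ I) : Function.Injective (zz e T) := by
  have key : ∀ k k', k < k' → zz e T k ≠ zz e T k' := by
    intro k k' hkk' heq
    have h1 : zz e T k ∈ zl e T k' := (mem_zl e T).mpr ⟨k, hkk', rfl⟩
    have h2 := (zl_spec e T I hI hT0 hram k').2.2
    rw [heq] at h1; exact h2 h1
  intro k k' h
  rcases lt_trichotomy k k' with hc | hc | hc
  · exact absurd h (key _ _ hc)
  · exact hc
  · exact absurd h.symm (key _ _ hc)

lemma swallow (hI : IsIdealOn I) (hT0 : ([] : List X) ∈ T)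
    (hram : ∀ s ∈ T, {x : X | s ++ [x] ∈ T}ᶜ ∈ I) : ∀ y : X, (∀ k, zl e T k ++ [y] ∈ T ∧ y ∉ zl e T k) → False := by
  intro y hy
  have hex : ∀ k, ∃ n, zl e T k ++ [e n] ∈ T ∧ e n ∉ zl e T k := by
    intro k
    exact ⟨e.symm y, by simpa using (hy k).1, by simpa using (hy k).2⟩
  have hfind : ∀ k, Nat.find (hex k) ≤ e.symm y := by
    intro k
    exact Nat.find_min' (hex k) ⟨by simpa using (hy k).1, by simpa using (hy k).2⟩
  have hval : ∀ k, zz e T k = e (Nat.find (hex k)) := by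
    intro k; rw [zz, zc, dif_pos (hex k)]
  set N := e.symm y
  have := Finite.exists_ne_map_eq_of_infinite
    (fun k : ℕ => (⟨Nat.find (hex k), Nat.lt_succ_of_le (hfind k)⟩ : Fin (N+1)))
  obtain ⟨a, b, hab, hfab⟩ := this
  apply hab
  apply zz_inj e T I hI hT0 hram
  have hfe : Nat.find (hex a) = Nat.find (hex b) := by
    simpa using congrArg Fin.val hfab
  rw [hval a, hval b, hfe]

/-! ### the D sets -/

def RamOK (l : List X) (y : X) : Prop := ∀ σ, σ.Sublist l → σ ∈ T → σ ++ [y] ∈ T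

noncomputable def Dfun (π : List X) (k : ℕ) : Set X :=
  {y | RamOK T (π.take (tri k)) y ∧ (∀ k' ≤ k, zl e T k' ++ [y] ∈ T) ∧ y ∉ zl e T k}

def cand (π : List X) (i : ℕ) (y : X) : Prop :=
  y ∉ π ∧ (i = 0 ∨ y ∈ Dfun e T π i) ∧ y ∉ Dfun e T π (i+1)

noncomputable def mfill (π : List X) : X :=
  if h : ∃ r, zz e T r ∉ π then zz e T (Nat.find h) else e 0

noncomputable def step (π : List X) : X :=
  if ht π.length = 0 then mfill e T π
  else if h : ∃ m, cand e T π (col π.length) (e m) then e (Nat.find h) else mfill e T π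

noncomputable def pll : ℕ → List X
  | 0 => []
  | n+1 => pll n ++ [step e T (pll n)]

noncomputable def gpl (n : ℕ) : X := step e T (pll e T n)

lemma pll_eq (n : ℕ) : pll e T n = (List.range n).map (gpl e T) := by
  induction n with
  | zero => rfl
  | succ n ih => rw [pll, ih]; simp [List.range_succ, gpl, ih]

lemma length_pll (n : ℕ) : (pll e T n).length = n := by simp [pll_eq]

lemma mem_pll {y : X} {n : ℕ} : y ∈ pll e T n ↔ ∃ m < n, gpl e T m = y := by
  rw [pll_eq]; simp

lemma pll_take {m n : ℕ} (h : m ≤ n) : (pll e T n).take m = pll e T m := by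
  rw [pll_eq, pll_eq, ← List.map_take, List.take_range, min_eq_left h]

noncomputable def Dfin (k : ℕ) : Set X := Dfun e T (pll e T (tri k)) k

lemma Dfun_pll_eq {k n : ℕ} (h : tri k ≤ n) : Dfun e T (pll e T n) k = Dfin e T k := by
  simp only [Dfin, Dfun, pll_take e T h, pll_take e T (le_refl (tri k))]

lemma Dfin_anti {k k' : ℕ} (h : k ≤ k') : Dfin e T k' ⊆ Dfin e T k := by
  intro y hy
  obtain ⟨h1, h2, h3⟩ := hy
  rw [pll_take e T (le_refl (tri k'))] at h1
  refine ⟨?_, fun k'' hk => h2 k'' (le_trans hk h), fun hmem => h3 ?_⟩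
  · rw [pll_take e T (le_refl (tri k))]
    intro σ hσ hσT
    exact h1 σ (hσ.trans (by rw [← pll_take e T (tri_mono h)]; exact List.take_sublist _ _)) hσT
  · rw [mem_zl] at hmem ⊢
    obtain ⟨m, hm, hzm⟩ := hmem
    exact ⟨m, lt_of_lt_of_le hm h, hzm⟩

lemma IunionList (hI : IsIdealOn I)
    (hram : ∀ s ∈ T, {x : X | s ++ [x] ∈ T}ᶜ ∈ I) (L : List (List X)) :
    {y : X | ∃ σ ∈ L, σ ∈ T ∧ σ ++ [y] ∉ T} ∈ I := by
  induction L with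
  | nil => exact Isub I hI (Ifin I hI Set.finite_empty) (by simp)
  | cons a L ih =>
    by_cases ha : a ∈ T
    · refine Isub I hI (Iun I hI (hram a ha) ih) ?_
      intro y hy
      simp only [List.mem_cons, Set.mem_setOf_eq] at hy
      obtain ⟨σ, hσ | hσ, hσT, hσy⟩ := hy
      · subst hσ; exact Or.inl hσy
      · exact Or.inr ⟨σ, hσ, hσT, hσy⟩
    · refine Isub I hI ih ?_
      intro y hy
      simp only [List.mem_cons, Set.mem_setOf_eq] at hy ⊢
      obtain ⟨σ, hσ | hσ, hσT, hσy⟩ := hy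
      · subst hσ; exact absurd hσT ha
      · exact ⟨σ, hσ, hσT, hσy⟩

lemma Dcompl (hI : IsIdealOn I) (hT0 : ([] : List X) ∈ T)
    (hram : ∀ s ∈ T, {x : X | s ++ [x] ∈ T}ᶜ ∈ I) (k : ℕ) : (Dfin e T k)ᶜ ∈ I := by
  have h1 := IunionList T I hI hram ((pll e T (tri k)).sublists)
  have h2 := IunionList T I hI hram ((List.range (k+1)).map (zl e T))
  have h3 : {y : X | y ∈ zl e T k} ∈ I := Ifin I hI (zl e T k).finite_toSet
  refine Isub I hI (Iun I hI (Iun I hI h1 h2) h3) ?_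
  intro y hy
  simp only [Set.mem_compl_iff] at hy
  unfold Dfin Dfun at hy
  rw [pll_take e T (le_refl (tri k))] at hy
  simp only [Set.mem_setOf_eq, not_and_or] at hy
  rcases hy with hy | hy | hy
  · left; left
    unfold RamOK at hy
    push_neg at hy
    obtain ⟨σ, hσ1, hσ2, hσ3⟩ := hy
    exact ⟨σ, List.mem_sublists.mpr hσ1, hσ2, hσ3⟩
  · left; right
    push_neg at hy
    obtain ⟨k', hk', hk'T⟩ := hy
    refine ⟨zl e T k', ?_, (zl_spec e T I hI hT0 hram k').1, hk'T⟩
    simp only [List.mem_map, List.mem_range]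
    exact ⟨k', by omega, rfl⟩
  · right; simpa using hy

lemma mfill_mem (π : List X) (hinj : Function.Injective (zz e T)) :
    mfill e T π ∉ π ∧ mfill e T π ∈ Set.range (zz e T) := by
  have hex : ∃ r, zz e T r ∉ π := by
    by_contra hc
    push_neg at hc
    have : Set.range (zz e T) ⊆ {x | x ∈ π} := by
      rintro x ⟨r, rfl⟩; exact hc r
    exact (Set.infinite_range_of_injective hinj) (Set.Finite.subset π.finite_toSet this)
  rw [mfill, dif_pos hex]
  exact ⟨Nat.find_spec hex, Set.mem_range_self _⟩

lemma step_spec (hI : IsIdealOn I) (hT0 : ([] : List X) ∈ T)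
    (hram : ∀ s ∈ T, {x : X | s ++ [x] ∈ T}ᶜ ∈ I) (n : ℕ) :
    gpl e T n ∉ pll e T n ∧
    (gpl e T n ∈ Set.range (zz e T) ∨
      (ht n ≠ 0 ∧ cand e T (pll e T n) (col n) (gpl e T n))) := by
  have hinj := zz_inj e T I hI hT0 hram
  rw [gpl, step, length_pll]
  by_cases h0 : ht n = 0
  · rw [if_pos h0]
    have := mfill_mem e T (pll e T n) hinj
    exact ⟨this.1, Or.inl this.2⟩
  · rw [if_neg h0]
    by_cases hc : ∃ m, cand e T (pll e T n) (col n) (e m)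
    · rw [dif_pos hc]
      have := Nat.find_spec hc
      exact ⟨this.1, Or.inr ⟨h0, this⟩⟩
    · rw [dif_neg hc]
      have := mfill_mem e T (pll e T n) hinj
      exact ⟨this.1, Or.inl this.2⟩


lemma gpl_inj (hI : IsIdealOn I) (hT0 : ([] : List X) ∈ T)
    (hram : ∀ s ∈ T, {x : X | s ++ [x] ∈ T}ᶜ ∈ I) : Function.Injective (gpl e T) := by
  have key : ∀ m n, m < n → gpl e T m ≠ gpl e T n := by
    intro m n hmn heq
    have h1 : gpl e T m ∈ pll e T n := (mem_pll e T).mpr ⟨m, hmn, rfl⟩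
    have h2 := (step_spec e T I hI hT0 hram n).1
    rw [heq] at h1
    exact h2 h1
  intro m n h
  rcases lt_trichotomy m n with hc | hc | hc
  · exact absurd h (key _ _ hc)
  · exact hc
  · exact absurd h.symm (key _ _ hc)

lemma P6 (hI : IsIdealOn I) (hT0 : ([] : List X) ∈ T)
    (hram : ∀ s ∈ T, {x : X | s ++ [x] ∈ T}ᶜ ∈ I) (n : ℕ) :
    gpl e T n ∈ Set.range (zz e T) ∨ gpl e T n ∉ Dfin e T (col n + 1) := by
  rcases (step_spec e T I hI hT0 hram n).2 with h | ⟨hht, hcand⟩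
  · exact Or.inl h
  · right
    have hle : tri (col n + 1) ≤ n := code_le n (by have := col_add_ht n; omega)
    rw [← Dfun_pll_eq e T hle]
    exact hcand.2.2

lemma P5 (hI : IsIdealOn I) (hT0 : ([] : List X) ∈ T)
    (hram : ∀ s ∈ T, {x : X | s ++ [x] ∈ T}ᶜ ∈ I) (n : ℕ) :
    gpl e T n ∈ Set.range (zz e T) ∨ gpl e T n ∉ Dfin e T 0 ∨ gpl e T n ∈ Dfin e T (col n) := by
  rcases (step_spec e T I hI hT0 hram n).2 with h | ⟨hht, hcand⟩
  · exact Or.inl h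
  · right
    rcases hcand.2.1 with h0 | hD
    · by_cases hD0 : gpl e T n ∈ Dfin e T 0
      · right; rw [h0]; exact hD0
      · exact Or.inl hD0
    · right
      have hle : tri (col n) ≤ n := code_le n (by omega)
      rw [← Dfun_pll_eq e T hle]
      exact hD

lemma masters_placed (hI : IsIdealOn I) (hT0 : ([] : List X) ∈ T)
    (hram : ∀ s ∈ T, {x : X | s ++ [x] ∈ T}ᶜ ∈ I) (r : ℕ) : ∃ n, gpl e T n = zz e T r := by
  by_contra hno
  push_neg at hno
  have hnotin : ∀ nn, zz e T r ∉ pll e T nn := by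
    intro nn h
    obtain ⟨m, _, hm⟩ := (mem_pll e T).mp h
    exact hno m hm
  have hex : ∀ i : ℕ, ∃ r', zz e T r' ∉ pll e T (code i 0) := fun i => ⟨r, hnotin _⟩
  have hval : ∀ i, gpl e T (code i 0) = zz e T (Nat.find (hex i)) := by
    intro i
    rw [gpl, step, length_pll, if_pos (ht_code i 0), mfill, dif_pos (hex i)]
  have hle : ∀ i, Nat.find (hex i) ≤ r := fun i => Nat.find_min' (hex i) (hnotin _)
  obtain ⟨a, b, hab, hfab⟩ := Finite.exists_ne_map_eq_of_infinite
    (fun i : ℕ => (⟨Nat.find (hex i), Nat.lt_succ_of_le (hle i)⟩ : Fin (r+1)))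
  apply hab
  have hfe : Nat.find (hex a) = Nat.find (hex b) := by
    simpa using congrArg Fin.val hfab
  have : gpl e T (code a 0) = gpl e T (code b 0) := by rw [hval a, hval b, hfe]
  have hcode := gpl_inj e T I hI hT0 hram this
  have := congrArg col hcode
  rwa [col_code, col_code] at this

lemma all_placed (hI : IsIdealOn I) (hT0 : ([] : List X) ∈ T)
    (hram : ∀ s ∈ T, {x : X | s ++ [x] ∈ T}ᶜ ∈ I) : Function.Surjective (gpl e T) := by
  intro y
  by_contra hno
  push_neg at hno
  have hyM : y ∉ Set.range (zz e T) := by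
    rintro ⟨r, hr⟩
    obtain ⟨n, hn⟩ := masters_placed e T I hI hT0 hram r
    exact hno n (by rw [hn, hr])
  have hnotin : ∀ nn, y ∉ pll e T nn := by
    intro nn h
    obtain ⟨m, _, hm⟩ := (mem_pll e T).mp h
    exact hno m hm
  have hdie : ∃ k, y ∉ Dfin e T k := by
    by_contra hc
    push_neg at hc
    refine swallow e T I hI hT0 hram y (fun k => ⟨(hc k).2.1 k (le_refl k), (hc k).2.2⟩)
  set k0 := Nat.find hdie with hk0def
  set i0 := k0 - 1 with hi0def
  have hcy : ∀ j : ℕ, cand e T (pll e T (code i0 (j+1))) i0 y := by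
    intro j
    have hcl : col (code i0 (j+1)) + ht (code i0 (j+1)) = i0 + (j+1) := by
      rw [col_code, ht_code]
    refine ⟨hnotin _, ?_, ?_⟩
    · by_cases hk0 : k0 = 0
      · exact Or.inl (by omega)
      · right
        have hle : tri i0 ≤ code i0 (j+1) := code_le _ (by omega)
        rw [Dfun_pll_eq e T hle]
        have := Nat.find_min hdie (show i0 < k0 by omega)
        exact not_not.mp this
    · have hle : tri (i0+1) ≤ code i0 (j+1) := code_le _ (by omega)
      rw [Dfun_pll_eq e T hle]
      by_cases hk0 : k0 = 0
      · intro hmem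
        have hy0 : y ∉ Dfin e T 0 := by
          have hsp := Nat.find_spec hdie
          rwa [← hk0def, hk0] at hsp
        exact hy0 (Dfin_anti e T (by omega) hmem)
      · have : i0 + 1 = k0 := by omega
        rw [this]
        exact Nat.find_spec hdie
  have hcand : ∀ j : ℕ, ∃ m, cand e T (pll e T (code i0 (j+1))) (col (code i0 (j+1))) (e m) := by
    intro j
    refine ⟨e.symm y, ?_⟩
    rw [col_code]
    simpa using hcy j
  have hval : ∀ j, gpl e T (code i0 (j+1)) = e (Nat.find (hcand j)) := by
    intro j
    rw [gpl, step, length_pll, if_neg (by rw [ht_code]; omega), dif_pos (hcand j)]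
  have hle : ∀ j, Nat.find (hcand j) ≤ e.symm y := by
    intro j
    refine Nat.find_min' (hcand j) ?_
    rw [col_code]
    simpa using hcy j
  obtain ⟨a, b, hab, hfab⟩ := Finite.exists_ne_map_eq_of_infinite
    (fun j : ℕ => (⟨Nat.find (hcand j), Nat.lt_succ_of_le (hle j)⟩ : Fin (e.symm y + 1)))
  apply hab
  have hfe : Nat.find (hcand a) = Nat.find (hcand b) := by
    simpa using congrArg Fin.val hfab
  have : gpl e T (code i0 (a+1)) = gpl e T (code i0 (b+1)) := by
    rw [hval a, hval b, hfe]
  have hcode := gpl_inj e T I hI hT0 hram this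
  have := congrArg ht hcode
  rw [ht_code, ht_code] at this
  omega

lemma hard (e : ℕ ≃ X) (hI : IsIdealOn I) (hT0 : ([] : List X) ∈ T)
    (hram : ∀ s ∈ T, {x : X | s ++ [x] ∈ T}ᶜ ∈ I)
    (hbr : ∀ b : ℕ → X, (∀ k, (List.range k).map b ∈ T) → Set.range b ∈ I) :
    ∃ f : X ≃ (ℕ × ℕ), ∀ A ∈ WR, ⇑f ⁻¹' A ∈ I := by
  have hinj := gpl_inj e T I hI hT0 hram
  let e1 : ℕ ≃ X := Equiv.ofBijective (gpl e T) ⟨hinj, all_placed e T I hI hT0 hram⟩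
  let e2 : ℕ ≃ ℕ × ℕ :=
    { toFun := fun n => (col n, ht n)
      invFun := fun p => code p.1 p.2
      left_inv := code_colht
      right_inv := fun p => by simp [col_code, ht_code] }
  set f : X ≃ ℕ × ℕ := e1.symm.trans e2 with hfdef
  have hkey : ∀ y, gpl e T (e1.symm y) = y := fun y => e1.apply_symm_apply y
  have hfval : ∀ y, ⇑f y = (col (e1.symm y), ht (e1.symm y)) := fun y => rfl
  have hM : Set.range (zz e T) ∈ I := by
    refine hbr (zz e T) (fun k => ?_)
    rw [← zl_eq_map]
    exact (zl_spec e T I hI hT0 hram k).1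
  have hcol : ∀ i : ℕ, (⇑f) ⁻¹' {p : ℕ × ℕ | p.1 = i} ∈ I := by
    intro i
    refine Isub I hI (Iun I hI hM (Dcompl e T I hI hT0 hram (i+1))) ?_
    intro y hy
    have hyc : col (e1.symm y) = i := hy
    have := P6 e T I hI hT0 hram (e1.symm y)
    rw [hkey y, hyc] at this
    exact this
  have hgen2 : ∀ S : Set (ℕ × ℕ), WRgen2 S → (⇑f) ⁻¹' S ∈ I := by
    intro S hS
    set Kp : ℕ → Prop := fun n => (col n, ht n) ∈ S ∧ gpl e T n ∈ Dfin e T (col n) with hKpdef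
    have hsub : (⇑f) ⁻¹' S ⊆
        (Set.range (zz e T) ∪ (Dfin e T 0)ᶜ) ∪ (gpl e T) '' (setOf Kp) := by
      intro y hy
      rcases P5 e T I hI hT0 hram (e1.symm y) with h | h | h
      · rw [hkey y] at h; exact Or.inl (Or.inl h)
      · rw [hkey y] at h; exact Or.inl (Or.inr h)
      · exact Or.inr ⟨e1.symm y, ⟨hy, h⟩, hkey y⟩
    by_cases hKfin : (setOf Kp).Finite
    · exact Isub I hI
        (Iun I hI (Iun I hI hM (Dcompl e T I hI hT0 hram 0)) (Ifin I hI (hKfin.image _))) hsub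
    · have hKinf : (setOf Kp).Infinite := hKfin
      have hbranch : ∀ k, (List.range k).map (fun r => gpl e T (Nat.nth Kp r)) ∈ T := by
        intro k
        induction k with
        | zero => simpa using hT0
        | succ k ih =>
          rw [List.range_succ, List.map_append]
          set nk := Nat.nth Kp k with hnkdef
          have hKnk : Kp nk := Nat.nth_mem_of_infinite hKinf k
          obtain ⟨hram', -, -⟩ := hKnk.2
          rw [pll_take e T (le_refl _)] at hram'
          have hsubl : ((List.range k).map (fun r => gpl e T (Nat.nth Kp r))).Sublist
              (pll e T (tri (col nk))) := by
            rw [pll_eq]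
            have heq : (List.range k).map (fun r => gpl e T (Nat.nth Kp r)) =
                ((List.range k).map (Nat.nth Kp)).map (gpl e T) := by
              rw [List.map_map]; rfl
            rw [heq]
            apply List.Sublist.map
            apply sublist_range
            · exact List.Pairwise.map _ (fun a b hab => (Nat.nth_lt_nth hKinf).mpr hab)
                (List.pairwise_lt_range (n := k))
            · intro x hx
              simp only [List.mem_map, List.mem_range] at hx
              obtain ⟨r, hr, rfl⟩ := hx
              have hlt : Nat.nth Kp r < nk := (Nat.nth_lt_nth hKinf).mpr hr
              set nr := Nat.nth Kp r with hnrdef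
              have hKnr : Kp nr := Nat.nth_mem_of_infinite hKinf r
              have hne : ((col nr, ht nr) : ℕ × ℕ) ≠ (col nk, ht nk) := by
                intro hEq
                have h1 : col nr = col nk := congrArg Prod.fst hEq
                have h2 : ht nr = ht nk := congrArg Prod.snd hEq
                have : nr = nk := by
                  rw [← code_colht nr, ← code_colht nk, h1, h2]
                omega
              rcases hS _ hKnr.1 _ hKnk.1 hne with hc | hc
              · exfalso
                simp only [] at hc
                have h1 : nk < tri (col nr) := lt_tri_of_code nk (by omega)
                have h2 : tri (col nr) ≤ nr := code_le nr (by omega)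
                omega
              · exact lt_tri_of_code nr (by simp only [] at hc; omega)
          have := hram' _ hsubl ih
          simpa using this
      have hrange := hbr _ hbranch
      have himg : Set.range (fun r => gpl e T (Nat.nth Kp r)) = gpl e T '' setOf Kp := by
        have : (fun r => gpl e T (Nat.nth Kp r)) = (gpl e T) ∘ (Nat.nth Kp) := rfl
        rw [this, Set.range_comp, Nat.range_nth_of_infinite hKinf]; rfl
      rw [himg] at hrange
      exact Isub I hI
        (Iun I hI (Iun I hI hM (Dcompl e T I hI hT0 hram 0)) hrange) hsub
  refine ⟨f, ?_⟩
  intro A hA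
  obtain ⟨C, hCgen, hAsub⟩ := hA
  have hsUnion : ∀ C' : Finset (Set (ℕ × ℕ)), (∀ S ∈ C', WRgen1 S ∨ WRgen2 S) →
      (⇑f) ⁻¹' (⋃₀ ↑C') ∈ I := by
    intro C'
    induction C' using Finset.induction with
    | empty => intro _; simpa using Ifin I hI Set.finite_empty
    | @insert S C'' hS ih =>
      intro hgen
      rw [Finset.coe_insert, Set.sUnion_insert, Set.preimage_union]
      refine Iun I hI ?_ (ih (fun S' hS' => hgen S' (Finset.mem_insert_of_mem hS')))
      rcases hgen S (Finset.mem_insert_self S C'') with h1 | h2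
      · obtain ⟨i, rfl⟩ := h1
        exact hcol i
      · exact hgen2 S h2
  exact Isub I hI (hsUnion C hCgen) (fun y hy => hAsub hy)


lemma lineUnion_mem_WR (N : ℕ) : {p : ℕ × ℕ | p.1 ≤ N} ∈ WR := by
  classical
  refine ⟨(Finset.range (N+1)).image (fun i => {p : ℕ × ℕ | p.1 = i}), ?_, ?_⟩
  · intro S hS
    simp only [Finset.mem_image, Finset.mem_range] at hS
    obtain ⟨i, -, rfl⟩ := hS
    exact Or.inl ⟨i, rfl⟩
  · intro p hp
    simp only [Set.mem_setOf_eq] at hp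
    refine ⟨{q : ℕ × ℕ | q.1 = p.1}, ?_, rfl⟩
    simp only [Finset.coe_image, Set.mem_image, Finset.mem_coe, Finset.mem_range]
    exact ⟨p.1, by omega, rfl⟩

lemma gen2_mem_WR {S : Set (ℕ × ℕ)} (hS : WRgen2 S) : S ∈ WR := by
  refine ⟨{S}, ?_, by simp⟩
  intro S' hS'
  simp only [Finset.mem_singleton] at hS'
  subst hS'
  exact Or.inr hS

lemma easy {Y : Type*} (J : Set (Set Y)) (hJ : IsIdealOn J) (f : Y → ℕ × ℕ)
    (hf : ∀ A ∈ WR, f ⁻¹' A ∈ J) : ¬ WeaklyRamsey J := by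
  intro hWR
  set R : Y → Y → Prop := fun x y => (f y).1 > (f x).1 + (f x).2 with hRdef
  set TT : Set (List Y) := {s | List.Chain' R s} with hTdef
  have h0 : ([] : List Y) ∈ TT := List.isChain_nil (R := R)
  have htree : IsTree TT := fun s hs t ht => List.IsChain.prefix hs ht
  have hram : ∀ s ∈ TT, {x : Y | s ++ [x] ∈ TT}ᶜ ∈ J := by
    intro s hs
    have hiff : ∀ x : Y, s ++ [x] ∈ TT ↔ ∀ y ∈ s.getLast?, R y x := by
      intro x
      constructor
      · intro h y hy
        rw [hTdef, Set.mem_setOf_eq] at h; unfold List.Chain' at h; rw [List.isChain_append] at h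
        exact h.2.2 y hy x rfl
      · intro h
        rw [hTdef, Set.mem_setOf_eq]; unfold List.Chain'; rw [List.isChain_append]
        exact ⟨hs, List.isChain_singleton x, fun y hy x' hx' => by
          simp only [List.head?_cons, Option.mem_def, Option.some.injEq] at hx'
          subst hx'; exact h y hy⟩
    cases hlast : s.getLast? with
    | none =>
      have : {x : Y | s ++ [x] ∈ TT}ᶜ = ∅ := by
        ext x
        simp only [Set.mem_compl_iff, Set.mem_empty_iff_false, iff_false, not_not,
          Set.mem_setOf_eq]
        rw [hiff x, hlast]
        simp
      rw [this]
      exact hJ.2.2.1 ∅ Set.finite_empty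
    | some y =>
      have hsub : {x : Y | s ++ [x] ∈ TT}ᶜ ⊆ f ⁻¹' {p : ℕ × ℕ | p.1 ≤ (f y).1 + (f y).2} := by
        intro x hx
        simp only [Set.mem_compl_iff, Set.mem_setOf_eq] at hx
        rw [hiff x, hlast] at hx
        simp only [Option.mem_def, Option.some.injEq, forall_eq'] at hx
        rw [hRdef] at hx
        simp only [Set.mem_preimage, Set.mem_setOf_eq]
        omega
      exact hJ.1 _ (hf _ (lineUnion_mem_WR ((f y).1 + (f y).2))) _ hsub
  obtain ⟨b, hb1, hb2⟩ := hWR TT h0 htree hram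
  have hchain : ∀ k, R (b k) (b (k+1)) := by
    intro k
    have h := hb1 (k+2)
    rw [List.range_succ, List.range_succ, List.map_append, List.map_append] at h
    rw [hTdef, Set.mem_setOf_eq] at h; unfold List.Chain' at h; rw [List.isChain_append] at h
    refine h.2.2 (b k) ?_ (b (k+1)) rfl
    simp
  have hmono : ∀ m m', m < m' → (f (b m')).1 > (f (b m)).1 + (f (b m)).2 := by
    intro m m' h
    induction m' with
    | zero => omega
    | succ m' ih =>
      rcases Nat.lt_succ_iff_lt_or_eq.mp h with h' | h'
      · have h1 := ih h'
        have h2 := hchain m'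
        rw [hRdef] at h2
        omega
      · subst h'
        exact hchain m
  have hS : WRgen2 (Set.range (f ∘ b)) := by
    rintro p ⟨m, rfl⟩ q ⟨m', rfl⟩ hne
    rcases lt_trichotomy m m' with h | h | h
    · exact Or.inr (hmono m m' h)
    · exact absurd (by rw [h]) hne
    · exact Or.inl (hmono m' m h)
  have hrbI : Set.range b ∈ J := by
    refine hJ.1 _ (hf _ (gen2_mem_WR hS)) _ ?_
    rintro x ⟨m, rfl⟩
    exact ⟨m, rfl⟩
  exact hb2 hrbI

end WRP


theorem weaklyRamsey_characterization {X : Type*} [Countable X]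
    (I : Set (Set X)) (hI : IsIdealOn I) :
    (¬ WeaklyRamsey I ↔ ∃ f : X ≃ (ℕ × ℕ), ∀ A ∈ WR, ⇑f ⁻¹' A ∈ I) ∧
    (¬ WeaklyRamsey I ↔ ∃ f : X → ℕ × ℕ, ∀ A ∈ WR, f ⁻¹' A ∈ I) := by
  have easy' : (∃ f : X → ℕ × ℕ, ∀ A ∈ WR, f ⁻¹' A ∈ I) → ¬ WeaklyRamsey I := by
    rintro ⟨f, hf⟩
    exact WRP.easy I hI f hf
  have hard' : ¬ WeaklyRamsey I → ∃ f : X ≃ (ℕ × ℕ), ∀ A ∈ WR, ⇑f ⁻¹' A ∈ I := by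
    intro hNW
    rw [WeaklyRamsey] at hNW
    push_neg at hNW
    obtain ⟨T, hT0, hTree, hram, hbr⟩ := hNW
    have hinf : Infinite X := by
      by_contra h
      rw [not_infinite_iff_finite] at h
      exact hI.2.2.2 (hI.2.2.1 _ Set.finite_univ)
    obtain ⟨e⟩ : Nonempty (ℕ ≃ X) := nonempty_equiv_of_countable
    exact WRP.hard T I e hI hT0 hram (fun b hb => hbr b hb)
  constructor
  · exact ⟨hard', fun ⟨f, hf⟩ => easy' ⟨⇑f, hf⟩⟩
  · constructor
    · intro h
      obtain ⟨f, hf⟩ := hard' h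
      exact ⟨⇑f, hf⟩
    · exact easy'
end
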